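/- Let X be a Banach space, f : X → ℝ satisfy the θ-bilipschitz condition with constant K in a neighborhood of u: |f(z+2x) − 2f(z+x) − f(z+2y) + 2f(z+y)| ≤ K‖x−y‖^θ(‖x‖+‖y‖)^{2−θ} for x, y ∈ εB, z ∈ u+εB, 0 < θ ≤ 2. Then the function f^{{2}+}(u; ·) defined by f^{{2}+}(u;x) = sup_{w∈X} limsup_{λ↓0} λ⁻²(f(u+λw+2λx) − 2f(u+λw+λx) + f(u+λw)) satisfies |f^{{2}+}(u;x) − f^{{2}+}(u;v)| ≤ K‖x−v‖^θ(‖x‖+‖v‖)^{2−θ} for all x, v ∈ X. -/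

import Mathlib

/-- The second-order upper directional quantity
`f^{{2}+}(u; x) = sup_{w∈X} limsup_{λ↓0} λ⁻²(f(u+λw+2λx) − 2f(u+λw+λx) + f(u+λw))`,
valued in the extended reals. -/
noncomputable def secondUpperAt {X : Type*} [NormedAddCommGroup X] [NormedSpace ℝ X]
    (f : X → ℝ) (u x : X) : EReal :=
  ⨆ w : X, Filter.limsup
    (fun lam : ℝ =>
      (((f (u + lam • w + (2 * lam) • x) - 2 * f (u + lam • w + lam • x)
        + f (u + lam • w)) / lam ^ 2 : ℝ) : EReal))
    (nhdsWithin (0:ℝ) (Set.Ioi 0))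

lemma aux_key {X : Type*} [NormedAddCommGroup X] [NormedSpace ℝ X]
    (f : X → ℝ) (u : X) (θ K ε : ℝ)
    (hθ0 : 0 < θ) (hθ2 : θ ≤ 2) (hK : 0 < K) (hε : 0 < ε)
    (hf : ∀ x y z : X, ‖x‖ ≤ ε → ‖y‖ ≤ ε → ‖z - u‖ ≤ ε →
      |f (z + 2 • x) - 2 * f (z + x) - f (z + 2 • y) + 2 * f (z + y)|
        ≤ K * ‖x - y‖ ^ θ * (‖x‖ + ‖y‖) ^ (2 - θ))
    (x v : X) :
    secondUpperAt f u x
        ≤ secondUpperAt f u v + ((K * ‖x - v‖ ^ θ * (‖x‖ + ‖v‖) ^ (2 - θ) : ℝ) : EReal) := by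
  set C : ℝ := K * ‖x - v‖ ^ θ * (‖x‖ + ‖v‖) ^ (2 - θ) with hC
  rw [secondUpperAt, secondUpperAt]
  refine iSup_le fun w => ?_
  have key : ∀ᶠ lam in nhdsWithin (0:ℝ) (Set.Ioi 0),
      (((f (u + lam • w + (2 * lam) • x) - 2 * f (u + lam • w + lam • x)
        + f (u + lam • w)) / lam ^ 2 : ℝ) : EReal)
      ≤ (((f (u + lam • w + (2 * lam) • v) - 2 * f (u + lam • w + lam • v)
        + f (u + lam • w)) / lam ^ 2 : ℝ) : EReal) + (C : EReal) := by
    have hδ : 0 < ε / (1 + ‖x‖ + ‖v‖ + ‖w‖) := by positivity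
    filter_upwards [Ioo_mem_nhdsGT_of_mem
      (Set.mem_Ico.2 ⟨le_refl (0:ℝ), hδ⟩)] with lam hlam
    obtain ⟨hl0, hlδ⟩ := hlam
    have hbound : ∀ y : X, ‖y‖ ≤ ‖x‖ + ‖v‖ + ‖w‖ → ‖lam • y‖ ≤ ε := by
      intro y hy
      rw [norm_smul, Real.norm_of_nonneg hl0.le]
      calc lam * ‖y‖ ≤ lam * (1 + ‖x‖ + ‖v‖ + ‖w‖) := by nlinarith [norm_nonneg y]
        _ ≤ ε := by
          rw [← le_div_iff₀ (by positivity)] at *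
          linarith [hlδ]
    have hx : ‖lam • x‖ ≤ ε := hbound x (by have := norm_nonneg v; have := norm_nonneg w; linarith)
    have hv : ‖lam • v‖ ≤ ε := hbound v (by have := norm_nonneg x; have := norm_nonneg w; linarith)
    have hw : ‖(u + lam • w) - u‖ ≤ ε := by
      simpa using hbound w (by have := norm_nonneg x; have := norm_nonneg v; linarith)
    have h := hf (lam • x) (lam • v) (u + lam • w) hx hv hw
    have hsm : ∀ y : X, (2:ℕ) • (lam • y) = (2 * lam) • y := by
      intro y; rw [two_nsmul, two_mul, add_smul]
    rw [hsm, hsm] at h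
    have hscale : K * ‖lam • x - lam • v‖ ^ θ * (‖lam • x‖ + ‖lam • v‖) ^ (2 - θ)
        = lam ^ 2 * C := by
      rw [← smul_sub, norm_smul, norm_smul, norm_smul, Real.norm_of_nonneg hl0.le,
        ← mul_add, Real.mul_rpow hl0.le (norm_nonneg _),
        Real.mul_rpow hl0.le (by positivity)]
      have h2 : lam ^ θ * lam ^ (2 - θ) = lam ^ 2 := by
        rw [← Real.rpow_add hl0]; norm_num
      simp only [hC]
      linear_combination (K * ‖x - v‖ ^ θ * (‖x‖ + ‖v‖) ^ (2 - θ)) * h2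
    rw [hscale] at h
    rw [← EReal.coe_add, EReal.coe_le_coe_iff]
    rw [abs_le] at h
    have hl2 : (0:ℝ) < lam ^ 2 := by positivity
    rw [div_add' _ _ _ hl2.ne', div_le_div_iff₀ hl2 hl2]
    nlinarith [h.2]
  have h1 : Filter.limsup (fun lam : ℝ =>
      (((f (u + lam • w + (2 * lam) • x) - 2 * f (u + lam • w + lam • x)
        + f (u + lam • w)) / lam ^ 2 : ℝ) : EReal)) (nhdsWithin (0:ℝ) (Set.Ioi 0))
      ≤ Filter.limsup (fun lam : ℝ =>
      (((f (u + lam • w + (2 * lam) • v) - 2 * f (u + lam • w + lam • v)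
        + f (u + lam • w)) / lam ^ 2 : ℝ) : EReal) + (C : EReal))
        (nhdsWithin (0:ℝ) (Set.Ioi 0)) :=
    Filter.limsup_le_limsup key
  refine h1.trans ?_
  have h2 := EReal.limsup_add_le
    (u := fun lam : ℝ =>
      (((f (u + lam • w + (2 * lam) • v) - 2 * f (u + lam • w + lam • v)
        + f (u + lam • w)) / lam ^ 2 : ℝ) : EReal))
    (v := fun _ : ℝ => (C : EReal)) (f := nhdsWithin (0:ℝ) (Set.Ioi 0))
    (Or.inr (by rw [Filter.limsup_const]; exact EReal.coe_ne_top C))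
    (Or.inr (by rw [Filter.limsup_const]; exact EReal.coe_ne_bot C))
  rw [Filter.limsup_const] at h2
  refine (le_trans (by exact h2) ?_)
  refine add_le_add_left ?_ _
  exact le_iSup (fun w : X => Filter.limsup
    (fun lam : ℝ =>
      (((f (u + lam • w + (2 * lam) • v) - 2 * f (u + lam • w + lam • v)
        + f (u + lam • w)) / lam ^ 2 : ℝ) : EReal))
    (nhdsWithin (0:ℝ) (Set.Ioi 0))) w
theorem stmt15 {X : Type*} [NormedAddCommGroup X] [NormedSpace ℝ X] [CompleteSpace X]
    (f : X → ℝ) (u : X) (θ K ε : ℝ)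
    (hθ0 : 0 < θ) (hθ2 : θ ≤ 2) (hK : 0 < K) (hε : 0 < ε)
    (hf : ∀ x y z : X, ‖x‖ ≤ ε → ‖y‖ ≤ ε → ‖z - u‖ ≤ ε →
      |f (z + 2 • x) - 2 * f (z + x) - f (z + 2 • y) + 2 * f (z + y)|
        ≤ K * ‖x - y‖ ^ θ * (‖x‖ + ‖y‖) ^ (2 - θ))
    (x v : X) :
    secondUpperAt f u x
        ≤ secondUpperAt f u v + ((K * ‖x - v‖ ^ θ * (‖x‖ + ‖v‖) ^ (2 - θ) : ℝ) : EReal)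
    ∧ secondUpperAt f u v
        ≤ secondUpperAt f u x + ((K * ‖x - v‖ ^ θ * (‖x‖ + ‖v‖) ^ (2 - θ) : ℝ) : EReal) := by
  constructor
  · exact aux_key f u θ K ε hθ0 hθ2 hK hε hf x v
  · have h := aux_key f u θ K ε hθ0 hθ2 hK hε hf v x
    rwa [norm_sub_rev, add_comm ‖v‖] at h
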